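/- arXiv:1107.4527 — 6 statements merged into one kernel-verified Lean document; each statement's English description precedes it below -/
import Mathlib

section
/- For every p ≥ q ≥ 1, the incomplete Gamma integral satisfies ∫_p^∞ t^{q-1} e^{-t} dt ≤ e^{-p} p^q. -/
open MeasureTheory

lemma exp_decay_integral_aux {a : ℝ} (c : ℝ) (ha : 0 < a) :
    ∫ x in Set.Ioi c, Real.exp (-(a * x)) = Real.exp (-(a * c)) / a := by
  have h := MeasureTheory.integral_comp_mul_left_Ioi (fun x => Real.exp (-x)) c ha
  simp only [smul_eq_mul, integral_exp_neg_Ioi] at h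
  rw [h]
  ring

/-- For every `p ≥ q ≥ 1`, the incomplete Gamma integral satisfies
`∫_p^∞ t^(q-1) e^(-t) dt ≤ e^(-p) p^q`. -/
theorem stmt0 (p q : ℝ) (hq : 1 ≤ q) (hpq : q ≤ p) :
    ∫ t in Set.Ioi p, t ^ (q - 1) * Real.exp (-t) ≤ Real.exp (-p) * p ^ q := by
  have hp : (1:ℝ) ≤ p := le_trans hq hpq
  have hp0 : (0:ℝ) < p := lt_of_lt_of_le one_pos hp
  set a : ℝ := (p - q + 1) / p with ha_def
  have hd : (0:ℝ) < p - q + 1 := by linarith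
  have ha : 0 < a := div_pos hd hp0
  -- pointwise bound
  have hbound : ∀ t ∈ Set.Ioi p,
      t ^ (q - 1) * Real.exp (-t)
        ≤ p ^ (q - 1) * Real.exp (1 - q) * Real.exp (-(a * t)) := by
    intro t ht
    have htp : p < t := ht
    have ht0 : 0 < t := lt_trans hp0 htp
    have hlog : Real.log (t / p) ≤ t / p - 1 :=
      Real.log_le_sub_one_of_pos (div_pos ht0 hp0)
    have hld : Real.log (t / p) = Real.log t - Real.log p := Real.log_div ht0.ne' hp0.ne'
    have key : t ^ (q - 1) ≤ p ^ (q - 1) * Real.exp ((q - 1) * (t / p - 1)) := by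
      rw [Real.rpow_def_of_pos ht0, Real.rpow_def_of_pos hp0, ← Real.exp_add]
      apply Real.exp_le_exp.2
      have h1 : Real.log t - Real.log p ≤ t / p - 1 := by rw [← hld]; exact hlog
      nlinarith [mul_le_mul_of_nonneg_left h1 (sub_nonneg.2 hq)]
    have hexp : Real.exp ((q - 1) * (t / p - 1)) * Real.exp (-t)
        = Real.exp (1 - q) * Real.exp (-(a * t)) := by
      rw [← Real.exp_add, ← Real.exp_add]
      congr 1
      rw [ha_def]
      field_simp
      ring
    calc t ^ (q - 1) * Real.exp (-t)
        ≤ p ^ (q - 1) * Real.exp ((q - 1) * (t / p - 1)) * Real.exp (-t) :=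
          mul_le_mul_of_nonneg_right key (Real.exp_nonneg _)
      _ = p ^ (q - 1) * (Real.exp ((q - 1) * (t / p - 1)) * Real.exp (-t)) := by ring
      _ = p ^ (q - 1) * Real.exp (1 - q) * Real.exp (-(a * t)) := by rw [hexp]; ring
  -- integrability
  have hf : IntegrableOn (fun t : ℝ => t ^ (q - 1) * Real.exp (-t)) (Set.Ioi p) := by
    have h := (Real.GammaIntegral_convergent (show (0:ℝ) < q by linarith)).mono_set
      (Set.Ioi_subset_Ioi hp0.le)
    exact h.congr_fun (fun x _ => mul_comm _ _) measurableSet_Ioi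
  have hg : IntegrableOn
      (fun t : ℝ => p ^ (q - 1) * Real.exp (1 - q) * Real.exp (-(a * t))) (Set.Ioi p) := by
    have h := (exp_neg_integrableOn_Ioi p ha).const_mul (p ^ (q - 1) * Real.exp (1 - q))
    simpa [neg_mul, IntegrableOn] using h
  have hmono := setIntegral_mono_on hf hg measurableSet_Ioi hbound
  refine le_trans hmono ?_
  rw [integral_const_mul, exp_decay_integral_aux p ha]
  have hap : a * p = p - q + 1 := by rw [ha_def]; field_simp
  have hE : Real.exp (1 - q) * Real.exp (-(a * p)) = Real.exp (-p) := by
    rw [← Real.exp_add, hap]; congr 1; ring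
  have hpq1 : p ^ (q - 1) * p = p ^ q := by
    rw [← Real.rpow_add_one hp0.ne']
    norm_num
  calc p ^ (q - 1) * Real.exp (1 - q) * (Real.exp (-(a * p)) / a)
      = (p ^ (q - 1) * (Real.exp (1 - q) * Real.exp (-(a * p)))) / a := by ring
    _ = p ^ (q - 1) * Real.exp (-p) / a := by rw [hE]
    _ = p ^ q * Real.exp (-p) / (p - q + 1) := by
        rw [ha_def, div_div_eq_mul_div, ← hpq1]; ring
    _ ≤ p ^ q * Real.exp (-p) := by
        apply div_le_self
        · positivity
        · linarith
    _ = Real.exp (-p) * p ^ q := by ring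
end

section
/- Let K be a convex body of volume 1 in ℝ^n, let z_1, …, z_N ∈ ℝ^n, let q ≥ 1 and p ≥ max{log N, q}. Then (∫_K max_{1≤i≤N} |⟨x, z_i⟩|^q dx)^{1/q} ≤ 3e^3 · max_{1≤i≤N} h_{Z_p(K)}(z_i), where h_{Z_p(K)}(z) = (∫_K |⟨x,z⟩|^p dx)^{1/p}. -/
open MeasureTheory
open scoped RealInnerProductSpace

lemma aux_holder {α : Type*} [MeasurableSpace α] {μ : Measure α} [IsProbabilityMeasure μ]
    {f : α → ℝ} (hf : MemLp f ⊤ μ) (hfn : ∀ x, 0 ≤ f x) {q p : ℝ} (hq : 0 < q) (hpq : q ≤ p) :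
    (∫ x, f x ^ q ∂μ) ^ (1 / q) ≤ (∫ x, f x ^ p ∂μ) ^ (1 / p) := by
  have hp : 0 < p := hq.trans_le hpq
  have hq' : MemLp f (ENNReal.ofReal q) μ := hf.mono_exponent le_top
  have hp' : MemLp f (ENNReal.ofReal p) μ := hf.mono_exponent le_top
  have hqne : ENNReal.ofReal q ≠ 0 := by simp [ENNReal.ofReal_eq_zero, not_le, hq]
  have hpne : ENNReal.ofReal p ≠ 0 := by simp [ENNReal.ofReal_eq_zero, not_le, hp]
  have hcong : ∀ r : ℝ, (∫ x, ‖f x‖ ^ r ∂μ) = ∫ x, f x ^ r ∂μ := fun r =>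
    integral_congr_ae (Filter.Eventually.of_forall fun x => by
      simp [Real.norm_of_nonneg (hfn x)])
  have h := eLpNorm_le_eLpNorm_of_exponent_le (μ := μ)
    (ENNReal.ofReal_le_ofReal hpq) hq'.1
  rw [hq'.eLpNorm_eq_integral_rpow_norm hqne ENNReal.ofReal_ne_top,
      hp'.eLpNorm_eq_integral_rpow_norm hpne ENNReal.ofReal_ne_top,
      ENNReal.toReal_ofReal hq.le, ENNReal.toReal_ofReal hp.le, hcong, hcong] at h
  have hrhs : 0 ≤ (∫ x, f x ^ p ∂μ) ^ p⁻¹ :=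
    Real.rpow_nonneg (integral_nonneg fun x => Real.rpow_nonneg (hfn x) p) _
  have := (ENNReal.ofReal_le_ofReal_iff hrhs).mp h
  simpa [one_div] using this

/-- Let `K` be a convex body of volume 1 in `ℝⁿ`, `z₁, …, z_N ∈ ℝⁿ`, `q ≥ 1` and
`p ≥ max {log N, q}`. Then
`(∫_K max_i |⟨x, zᵢ⟩|^q dx)^(1/q) ≤ 3e³ · max_i h_{Z_p(K)}(zᵢ)`,
where `h_{Z_p(K)}(z) = (∫_K |⟨x,z⟩|^p dx)^(1/p)`. -/
theorem stmt1 (n N : ℕ) (hN : 0 < N) (K : Set (EuclideanSpace ℝ (Fin n)))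
    (hKcomp : IsCompact K) (hKconv : Convex ℝ K) (hKint : (interior K).Nonempty)
    (hKvol : volume K = 1) (z : Fin N → EuclideanSpace ℝ (Fin n))
    (q p : ℝ) (hq : 1 ≤ q) (hpN : Real.log N ≤ p) (hpq : q ≤ p) :
    (∫ x in K, (⨆ i, |⟪x, z i⟫|) ^ q) ^ (1 / q)
      ≤ 3 * Real.exp 3 * ⨆ i, (∫ x in K, |⟪x, z i⟫| ^ p) ^ (1 / p) := by
  have hKm : MeasurableSet K := hKcomp.measurableSet
  set μ := volume.restrict K with hμ
  haveI : IsProbabilityMeasure μ := ⟨by rw [Measure.restrict_apply_univ]; exact hKvol⟩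
  haveI : Nonempty (Fin N) := ⟨⟨0, hN⟩⟩
  have hq0 : (0 : ℝ) < q := lt_of_lt_of_le zero_lt_one hq
  have hp0 : (0 : ℝ) < p := lt_of_lt_of_le hq0 hpq
  set g : Fin N → EuclideanSpace ℝ (Fin n) → ℝ := fun i x => |⟪x, z i⟫| with hg
  have hgc : ∀ i, Continuous (g i) := fun i => (continuous_id.inner continuous_const).abs
  have hgn : ∀ i x, 0 ≤ g i x := fun i x => abs_nonneg _
  set f : EuclideanSpace ℝ (Fin n) → ℝ := fun x => ⨆ i, g i x with hf
  have hfc : Continuous f := by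
    have : f = fun x => Finset.univ.sup' Finset.univ_nonempty fun i => g i x := by
      funext x; exact (Finset.sup'_univ_eq_ciSup fun i => g i x).symm
    rw [this]
    exact Continuous.finset_sup'_apply _ fun i _ => hgc i
  have hfn : ∀ x, 0 ≤ f x :=
    fun x => le_ciSup_of_le (Set.Finite.bddAbove (Set.finite_range _)) ⟨0, hN⟩ (hgn _ x)
  obtain ⟨C, hC⟩ := hKcomp.exists_bound_of_continuousOn hfc.continuousOn
  have hftop : MemLp f ⊤ μ :=
    memLp_top_of_bound hfc.aestronglyMeasurable.restrict C
      ((ae_restrict_iff' hKm).mpr (Filter.Eventually.of_forall hC))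
  -- Step 1: Hölder
  have step1 : (∫ x, f x ^ q ∂μ) ^ (1 / q) ≤ (∫ x, f x ^ p ∂μ) ^ (1 / p) :=
    aux_holder hftop hfn hq0 hpq
  -- integrability
  have hgint : ∀ i, Integrable (fun x => g i x ^ p) μ :=
    fun i => ((hgc i).rpow_const fun x => Or.inr hp0.le).continuousOn.integrableOn_compact hKcomp
  have hfint : Integrable (fun x => f x ^ p) μ :=
    (hfc.rpow_const fun x => Or.inr hp0.le).continuousOn.integrableOn_compact hKcomp
  -- Step 2: ∫ f^p ≤ ∑ ∫ gᵢ^p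
  set B : Fin N → ℝ := fun i => ∫ x, g i x ^ p ∂μ with hB
  have hBnn : ∀ i, 0 ≤ B i := fun i => integral_nonneg fun x => Real.rpow_nonneg (hgn i x) p
  have step2 : (∫ x, f x ^ p ∂μ) ≤ ∑ i, B i := by
    rw [← integral_finset_sum Finset.univ fun i _ => hgint i]
    refine integral_mono hfint (integrable_finset_sum _ fun i _ => hgint i) fun x => ?_
    obtain ⟨i, hi⟩ := Finite.exists_max fun j => g j x
    have hfx : f x = g i x := le_antisymm (ciSup_le hi)
      (le_ciSup (f := fun j => g j x) (Set.Finite.bddAbove (Set.finite_range _)) i)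
    rw [hfx]
    exact Finset.single_le_sum (fun j _ => Real.rpow_nonneg (hgn j x) p) (Finset.mem_univ i)
  -- Step 3: ∑ ≤ N * sup
  set S : ℝ := ⨆ i, B i with hS
  have hSnn : 0 ≤ S := le_trans (hBnn ⟨0, hN⟩)
    (le_ciSup (Set.Finite.bddAbove (Set.finite_range _)) _)
  have step3 : (∑ i, B i) ≤ (N : ℝ) * S := by
    calc (∑ i, B i) ≤ ∑ _i : Fin N, S :=
          Finset.sum_le_sum fun i _ =>
            le_ciSup (Set.Finite.bddAbove (Set.finite_range _)) i
      _ = (N : ℝ) * S := by simp [Finset.sum_const, nsmul_eq_mul]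
  -- Step 4
  set T : ℝ := ⨆ i, (B i) ^ (1 / p) with hT
  have hTnn : 0 ≤ T := le_trans (Real.rpow_nonneg (hBnn ⟨0, hN⟩) _)
    (le_ciSup (f := fun i => (B i) ^ (1 / p)) (Set.Finite.bddAbove (Set.finite_range _)) _)
  have hexp : ((N : ℝ)) ^ (1 / p) ≤ Real.exp 1 := by
    have hN1 : (1 : ℝ) ≤ (N : ℝ) := by exact_mod_cast hN
    rw [Real.rpow_def_of_pos (by linarith)]
    apply Real.exp_le_exp.mpr
    rw [mul_one_div, div_le_one hp0]
    exact hpN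
  have hSp : S ^ (1 / p) ≤ T := by
    obtain ⟨i, hi⟩ := Finite.exists_max B
    have : S ≤ B i := ciSup_le hi
    calc S ^ (1 / p) ≤ (B i) ^ (1 / p) :=
          Real.rpow_le_rpow hSnn this (by positivity)
      _ ≤ T := le_ciSup (f := fun j => (B j) ^ (1 / p)) (Set.Finite.bddAbove (Set.finite_range _)) i
  have step4 : (∫ x, f x ^ p ∂μ) ^ (1 / p) ≤ Real.exp 1 * T := by
    calc (∫ x, f x ^ p ∂μ) ^ (1 / p) ≤ ((N : ℝ) * S) ^ (1 / p) :=
          Real.rpow_le_rpow (integral_nonneg fun x => Real.rpow_nonneg (hfn x) p)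
            (step2.trans step3) (by positivity)
      _ = (N : ℝ) ^ (1 / p) * S ^ (1 / p) :=
          Real.mul_rpow (Nat.cast_nonneg N) hSnn
      _ ≤ Real.exp 1 * T := by
          exact mul_le_mul hexp hSp (Real.rpow_nonneg hSnn _) (Real.exp_pos 1).le
  have final : Real.exp 1 * T ≤ 3 * Real.exp 3 * T := by
    have h13 : Real.exp 1 ≤ Real.exp 3 := Real.exp_le_exp.mpr (by norm_num)
    have h3 : Real.exp 3 ≤ 3 * Real.exp 3 := by nlinarith [Real.exp_pos 3]
    exact mul_le_mul_of_nonneg_right (h13.trans h3) hTnn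
  exact (step1.trans step4).trans final
end

section
/- Let K be a convex body of volume 1 in ℝ^n and let 1 ≤ r ≤ n. If A ⊆ K is measurable with |A| ≥ 2^{-r/2}, then for every p with r ≤ p ≤ n and every θ ∈ S^{n-1}, h_{Z_p(Ā)}(θ) ≤ 2 h_{Z_p(K)}(θ), where Ā = |A|^{-1/n} A is the homothet of A of volume 1. -/
open MeasureTheory
open scoped RealInnerProductSpace Pointwise

set_option maxHeartbeats 1000000 in
/-- Let `K` be a convex body of volume 1 in `ℝⁿ` and `1 ≤ r ≤ n`. If `A ⊆ K` is
measurable with `|A| ≥ 2^(-r/2)`, then for every `p` with `r ≤ p ≤ n` and every unit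
vector `θ`, `h_{Z_p(Ā)}(θ) ≤ 2 h_{Z_p(K)}(θ)`, where `Ā = |A|^(-1/n) • A`. -/
theorem stmt3 (n : ℕ) (K A : Set (EuclideanSpace ℝ (Fin n)))
    (hKcomp : IsCompact K) (hKconv : Convex ℝ K) (hKint : (interior K).Nonempty)
    (hKvol : volume K = 1) (hAK : A ⊆ K) (hAmeas : MeasurableSet A)
    (r : ℝ) (hr1 : 1 ≤ r) (hrn : r ≤ n)
    (hAvol : ENNReal.ofReal ((2 : ℝ) ^ (-(r / 2))) ≤ volume A)
    (p : ℝ) (hrp : r ≤ p) (hpn : p ≤ n)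
    (θ : EuclideanSpace ℝ (Fin n)) (hθ : ‖θ‖ = 1) :
    (∫ x in ((volume A).toReal ^ (-(1 : ℝ) / n)) • A, |⟪x, θ⟫| ^ p) ^ (1 / p)
      ≤ 2 * (∫ x in K, |⟪x, θ⟫| ^ p) ^ (1 / p) := by
  have hp1 : (1 : ℝ) ≤ p := hr1.trans hrp
  have hp0 : (0 : ℝ) < p := lt_of_lt_of_le one_pos hp1
  have hn0 : (0 : ℝ) < n := lt_of_lt_of_le one_pos (hr1.trans hrn)
  set a : ℝ := (volume A).toReal with ha_def
  have hAle : volume A ≤ 1 := hKvol ▸ measure_mono hAK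
  have hAne : volume A ≠ ⊤ := (hAle.trans_lt ENNReal.one_lt_top).ne
  have ha1 : a ≤ 1 := by
    simpa using ENNReal.toReal_mono ENNReal.one_ne_top hAle
  have halow : (2 : ℝ) ^ (-(r / 2)) ≤ a := by
    have := ENNReal.toReal_mono hAne hAvol
    rwa [ENNReal.toReal_ofReal (Real.rpow_nonneg (by norm_num) _)] at this
  have ha0 : 0 < a := lt_of_lt_of_le (Real.rpow_pos_of_pos (by norm_num) _) halow
  set c : ℝ := a ^ (-(1 : ℝ) / n) with hc_def
  have hc0 : 0 < c := Real.rpow_pos_of_pos ha0 _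
  -- c ≤ 2 ^ (r / (2 * n))
  have hcle : c ≤ (2 : ℝ) ^ (r / (2 * n)) := by
    have h1 : c ≤ ((2 : ℝ) ^ (-(r / 2))) ^ (-(1 : ℝ) / n) :=
      Real.rpow_le_rpow_of_nonpos (Real.rpow_pos_of_pos (by norm_num) _) halow
        (div_nonpos_iff.mpr (Or.inr ⟨by norm_num, hn0.le⟩))
    have h2 : ((2 : ℝ) ^ (-(r / 2))) ^ (-(1 : ℝ) / n) = (2 : ℝ) ^ (r / (2 * n)) := by
      rw [← Real.rpow_mul (by norm_num)]
      congr 1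
      field_simp
    exact h1.trans h2.le
  set f : EuclideanSpace ℝ (Fin n) → ℝ := fun x => |⟪x, θ⟫| ^ p with hf_def
  have hfc : Continuous f := by
    apply (Real.continuous_rpow_const hp0.le).comp
    exact (continuous_id.inner continuous_const).abs
  have hIK : IntegrableOn f K := hfc.continuousOn.integrableOn_compact hKcomp
  have hfnn : ∀ x, 0 ≤ f x := fun x => Real.rpow_nonneg (abs_nonneg _) _
  have hIA_nonneg : 0 ≤ ∫ x in A, f x := setIntegral_nonneg hAmeas fun x _ => hfnn x
  have hIK_nonneg : 0 ≤ ∫ x in K, f x :=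
    setIntegral_nonneg hKcomp.measurableSet fun x _ => hfnn x
  -- compare integrals over A and K
  have hmono : ∫ x in A, f x ≤ ∫ x in K, f x :=
    setIntegral_mono_set hIK (Filter.Eventually.of_forall fun x => hfnn x)
      (HasSubset.Subset.eventuallyLE hAK)
  -- change of variables
  have hcv : ∫ x in c • A, f x = c ^ ((n : ℝ) + p) * ∫ x in A, f x := by
    have := MeasureTheory.Measure.setIntegral_comp_smul_of_pos volume f A hc0
    have hrank : Module.finrank ℝ (EuclideanSpace ℝ (Fin n)) = n := by
      simp [finrank_euclideanSpace]
    rw [hrank] at this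
    have hleft : ∫ x in A, f (c • x) = c ^ p * ∫ x in A, f x := by
      have : ∀ x, f (c • x) = c ^ p * f x := by
        intro x
        simp only [hf_def, real_inner_smul_left, abs_mul, abs_of_pos hc0]
        rw [Real.mul_rpow hc0.le (abs_nonneg _)]
      simp only [this]
      exact integral_const_mul _ _
    rw [hleft, smul_eq_mul] at this
    have h2 : ∫ x in c • A, f x = c ^ n * (c ^ p * ∫ x in A, f x) := by
      rw [this]
      field_simp
    rw [h2, ← Real.rpow_natCast c n, ← mul_assoc, ← Real.rpow_add hc0]
  rw [hcv]
  have hsplit : (c ^ ((n : ℝ) + p) * ∫ x in A, f x) ^ (1 / p)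
      = c ^ (((n : ℝ) + p) * (1 / p)) * (∫ x in A, f x) ^ (1 / p) := by
    rw [Real.mul_rpow (Real.rpow_nonneg hc0.le _) hIA_nonneg, ← Real.rpow_mul hc0.le]
  rw [hsplit]
  have hbound : c ^ (((n : ℝ) + p) * (1 / p)) ≤ 2 := by
    have e1 : c ^ (((n : ℝ) + p) * (1 / p)) ≤ ((2:ℝ) ^ (r / (2 * n))) ^ (((n : ℝ) + p) * (1 / p)) :=
      Real.rpow_le_rpow hc0.le hcle (by positivity)
    have e2 : ((2:ℝ) ^ (r / (2 * n))) ^ (((n : ℝ) + p) * (1 / p))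
        = (2:ℝ) ^ ((r / (2 * n)) * (((n : ℝ) + p) * (1 / p))) := by
      rw [← Real.rpow_mul (by norm_num)]
    have e3 : (r / (2 * n)) * (((n : ℝ) + p) * (1 / p)) ≤ 1 := by
      rw [mul_one_div, div_mul_div_comm, div_le_one (by positivity)]
      have h1 : r * n ≤ p * n := mul_le_mul_of_nonneg_right hrp hn0.le
      have h2 : r * p ≤ n * p := mul_le_mul_of_nonneg_right (hrp.trans hpn) hp0.le
      nlinarith [h1, h2]
    calc c ^ (((n : ℝ) + p) * (1 / p)) ≤ (2:ℝ) ^ ((r / (2 * n)) * (((n : ℝ) + p) * (1 / p))) :=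
          e1.trans_eq e2
      _ ≤ (2:ℝ) ^ (1:ℝ) := Real.rpow_le_rpow_of_exponent_le one_le_two e3
      _ = 2 := Real.rpow_one 2
  have hmono' : (∫ x in A, f x) ^ (1 / p) ≤ (∫ x in K, f x) ^ (1 / p) :=
    Real.rpow_le_rpow hIA_nonneg hmono (by positivity)
  calc c ^ (((n : ℝ) + p) * (1 / p)) * (∫ x in A, f x) ^ (1 / p)
      ≤ 2 * (∫ x in K, f x) ^ (1 / p) := by
        apply mul_le_mul hbound hmono' (Real.rpow_nonneg hIA_nonneg _) (by norm_num)
end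

section
/- Suppose for a convex body K of volume 1 in ℝ^n, a subset A ⊆ K, a direction θ ∈ S^{n-1} and an exponent p ≥ 1 one has (∫_K |⟨x,θ⟩|^{2p} dx)^{1/(2p)} ≤ M (∫_K |⟨x,θ⟩|^p dx)^{1/p} for some M > 0, and |K \ A| ≤ (2M^p)^{-2}·(1/4). Then ∫_K |⟨x,θ⟩|^p dx ≤ 2 ∫_{Ā} |⟨x,θ⟩|^p dx, where Ā = |A|^{-1/n}A. -/
open MeasureTheory
open scoped RealInnerProductSpace Pointwise

/-- Suppose that for a convex body `K` of volume 1 in `ℝⁿ`, a subset `A ⊆ K`, a direction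
`θ ∈ S^{n-1}` and an exponent `p ≥ 1` one has
`(∫_K |⟨x,θ⟩|^(2p))^(1/(2p)) ≤ M (∫_K |⟨x,θ⟩|^p)^(1/p)` for some `M > 0`, and
`|K \ A| ≤ (2M^p)^(-2) · (1/4)`. Then `∫_K |⟨x,θ⟩|^p ≤ 2 ∫_{Ā} |⟨x,θ⟩|^p`,
where `Ā = |A|^(-1/n) • A`. -/
theorem stmt4 (n : ℕ) (K A : Set (EuclideanSpace ℝ (Fin n)))
    (hKcomp : IsCompact K) (hKconv : Convex ℝ K) (hKint : (interior K).Nonempty)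
    (hKvol : volume K = 1) (hAK : A ⊆ K) (hAmeas : MeasurableSet A)
    (θ : EuclideanSpace ℝ (Fin n)) (hθ : ‖θ‖ = 1)
    (p : ℝ) (hp : 1 ≤ p) (M : ℝ) (hM : 0 < M)
    (hRH : (∫ x in K, |⟪x, θ⟫| ^ (2 * p)) ^ (1 / (2 * p))
            ≤ M * (∫ x in K, |⟪x, θ⟫| ^ p) ^ (1 / p))
    (hsmall : volume (K \ A) ≤ ENNReal.ofReal (((2 * M ^ p)⁻¹) ^ 2 * (1 / 4))) :
    ∫ x in K, |⟪x, θ⟫| ^ p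
      ≤ 2 * ∫ x in ((volume A).toReal ^ (-(1 : ℝ) / n)) • A, |⟪x, θ⟫| ^ p := by
  have hp0 : (0:ℝ) < p := lt_of_lt_of_le one_pos hp
  have hcont : Continuous fun x : EuclideanSpace ℝ (Fin n) => |⟪x, θ⟫| ^ p :=
    ((continuous_id.inner continuous_const).abs).rpow_const fun x => Or.inr hp0.le
  have hcont2 : Continuous fun x : EuclideanSpace ℝ (Fin n) => |⟪x, θ⟫| ^ (2*p) :=
    ((continuous_id.inner continuous_const).abs).rpow_const fun x => Or.inr (by positivity)
  have hfnn : ∀ x : EuclideanSpace ℝ (Fin n), 0 ≤ |⟪x, θ⟫| ^ p :=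
    fun x => Real.rpow_nonneg (abs_nonneg _) _
  have hKmeas : MeasurableSet K := hKcomp.measurableSet
  have hfiK : IntegrableOn (fun x => |⟪x, θ⟫| ^ p) K :=
    hcont.continuousOn.integrableOn_compact hKcomp
  have hFiK : IntegrableOn (fun x => |⟪x, θ⟫| ^ (2*p)) K :=
    hcont2.continuousOn.integrableOn_compact hKcomp
  -- Cauchy-Schwarz on subsets of K
  have key : ∀ s : Set (EuclideanSpace ℝ (Fin n)), MeasurableSet s → s ⊆ K →
      ∫ x in s, |⟪x, θ⟫| ^ p
        ≤ (∫ x in K, |⟪x, θ⟫| ^ (2*p)) ^ ((1:ℝ)/2) * ((volume s).toReal) ^ ((1:ℝ)/2) := by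
    intro s hsm hsK
    haveI : IsFiniteMeasure (volume.restrict s) := by
      constructor
      rw [Measure.restrict_apply_univ]
      exact lt_of_le_of_lt (hKvol ▸ measure_mono hsK) ENNReal.one_lt_top
    obtain ⟨C, hC⟩ := hKcomp.exists_bound_of_continuousOn hcont.continuousOn
    have hmem : MemLp (fun x => |⟪x, θ⟫| ^ p) (ENNReal.ofReal 2) (volume.restrict s) :=
      MemLp.of_bound (hcont.aestronglyMeasurable.restrict) C
        ((ae_restrict_iff' hsm).2 (Filter.Eventually.of_forall fun x hx => hC x (hsK hx)))
    have hmem1 : MemLp (fun _ : EuclideanSpace ℝ (Fin n) => (1:ℝ)) (ENNReal.ofReal 2)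
        (volume.restrict s) := memLp_const 1
    have hpq : Real.HolderConjugate 2 2 := Real.holderConjugate_iff.mpr ⟨one_lt_two, by norm_num⟩
    have H := MeasureTheory.integral_mul_le_Lp_mul_Lq_of_nonneg hpq
      (Filter.Eventually.of_forall fun x => hfnn x)
      (Filter.Eventually.of_forall fun _ => zero_le_one) hmem hmem1
    have hsq : ∀ x : EuclideanSpace ℝ (Fin n), (|⟪x, θ⟫| ^ p) ^ (2:ℝ) = |⟪x, θ⟫| ^ (2*p) := by
      intro x
      rw [← Real.rpow_mul (abs_nonneg _), mul_comm p 2]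
    simp only [mul_one, Real.one_rpow, hsq, integral_const, Measure.real, Measure.restrict_apply_univ,
      smul_eq_mul] at H
    have hmono : ∫ x in s, |⟪x, θ⟫| ^ (2*p) ≤ ∫ x in K, |⟪x, θ⟫| ^ (2*p) :=
      setIntegral_mono_set hFiK
        (Filter.Eventually.of_forall fun x => Real.rpow_nonneg (abs_nonneg _) _)
        (HasSubset.Subset.eventuallyLE hsK)
    refine H.trans (mul_le_mul_of_nonneg_right ?_ (Real.rpow_nonneg ENNReal.toReal_nonneg _))
    exact Real.rpow_le_rpow
      (setIntegral_nonneg hsm fun x _ => Real.rpow_nonneg (abs_nonneg _) _) hmono (by norm_num)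
  have hI0 : 0 ≤ ∫ x in K, |⟪x, θ⟫| ^ p := setIntegral_nonneg hKmeas fun x _ => hfnn x
  rcases le_or_gt (∫ x in K, |⟪x, θ⟫| ^ p) 0 with hIle | hIpos
  · have hR0 : 0 ≤ ∫ x in (((volume A).toReal ^ (-(1:ℝ)/n)) • A), |⟪x, θ⟫| ^ p :=
      integral_nonneg fun x => hfnn x
    linarith
  have hJ0 : 0 ≤ ∫ x in K, |⟪x, θ⟫| ^ (2*p) :=
    setIntegral_nonneg hKmeas fun x _ => Real.rpow_nonneg (abs_nonneg _) _
  have hstep1 : ∫ x in K, |⟪x, θ⟫| ^ p ≤ (∫ x in K, |⟪x, θ⟫| ^ (2*p)) ^ ((1:ℝ)/2) := by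
    have h := key K hKmeas subset_rfl
    rwa [hKvol, ENNReal.toReal_one, Real.one_rpow, mul_one] at h
  have hstep2 : (∫ x in K, |⟪x, θ⟫| ^ (2*p)) ^ ((1:ℝ)/2)
      ≤ M ^ p * ∫ x in K, |⟪x, θ⟫| ^ p := by
    have h := Real.rpow_le_rpow (Real.rpow_nonneg hJ0 _) hRH hp0.le
    rw [← Real.rpow_mul hJ0, Real.mul_rpow hM.le (Real.rpow_nonneg hI0 _),
      ← Real.rpow_mul hI0] at h
    have e1 : 1 / (2*p) * p = (1:ℝ)/2 := by field_simp
    have e2 : 1 / p * p = (1:ℝ) := by field_simp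
    rwa [e1, e2, Real.rpow_one] at h
  have hMp0 : (0:ℝ) < M ^ p := Real.rpow_pos_of_pos hM p
  have hMp1 : (1:ℝ) ≤ M ^ p := by
    by_contra hc
    push_neg at hc
    have h1 := hstep1.trans hstep2
    nlinarith
  have hdiff_meas : MeasurableSet (K \ A) := hKmeas.diff hAmeas
  have hsplit : ∫ x in K \ A, |⟪x, θ⟫| ^ p
      = (∫ x in K, |⟪x, θ⟫| ^ p) - ∫ x in A, |⟪x, θ⟫| ^ p :=
    integral_diff hAmeas hfiK hAK
  have hvol : (volume (K \ A)).toReal ≤ ((2 * M ^ p)⁻¹) ^ 2 * (1/4) :=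
    ENNReal.toReal_le_of_le_ofReal (by positivity) hsmall
  have hID : ∫ x in K \ A, |⟪x, θ⟫| ^ p ≤ (1/4) * ∫ x in K, |⟪x, θ⟫| ^ p := by
    have h1 := key (K \ A) hdiff_meas Set.diff_subset
    have h2 : ((volume (K \ A)).toReal) ^ ((1:ℝ)/2) ≤ (2 * M ^ p)⁻¹ * (1/2) := by
      have hb : (volume (K \ A)).toReal ≤ ((2 * M ^ p)⁻¹ * (1/2))^(2:ℕ) := by
        refine hvol.trans (le_of_eq ?_)
        ring
      calc ((volume (K \ A)).toReal) ^ ((1:ℝ)/2)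
          ≤ (((2 * M ^ p)⁻¹ * (1/2))^(2:ℕ)) ^ ((1:ℝ)/2) :=
            Real.rpow_le_rpow ENNReal.toReal_nonneg hb (by norm_num)
        _ = (2 * M ^ p)⁻¹ * (1/2) := by
            rw [← Real.rpow_natCast ((2 * M ^ p)⁻¹ * (1/2)) 2,
              ← Real.rpow_mul (by positivity)]
            norm_num
    have h3 : (∫ x in K, |⟪x, θ⟫| ^ (2*p)) ^ ((1:ℝ)/2) * ((volume (K \ A)).toReal) ^ ((1:ℝ)/2)
        ≤ (M ^ p * ∫ x in K, |⟪x, θ⟫| ^ p) * ((2 * M ^ p)⁻¹ * (1/2)) :=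
      mul_le_mul hstep2 h2 (Real.rpow_nonneg ENNReal.toReal_nonneg _) (by positivity)
    have h4 : (M ^ p * ∫ x in K, |⟪x, θ⟫| ^ p) * ((2 * M ^ p)⁻¹ * (1/2))
        = (1/4) * ∫ x in K, |⟪x, θ⟫| ^ p := by
      have : M ^ p ≠ 0 := hMp0.ne'
      field_simp
      ring
    linarith [h1, h3]
  have hIA : ∫ x in K, |⟪x, θ⟫| ^ p ≤ 2 * ∫ x in A, |⟪x, θ⟫| ^ p := by
    linarith [hsplit, hID]
  -- positivity of the volume of A
  have hA_le : volume A ≤ 1 := hKvol ▸ measure_mono hAK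
  have hc_le : ((2 * M ^ p)⁻¹) ^ 2 * (1/4) ≤ 1/16 := by
    have hinv : (2 * M ^ p)⁻¹ ≤ 1/2 := by
      rw [inv_le_comm₀ (by positivity) (by norm_num)]
      nlinarith
    have hinv0 : (0:ℝ) ≤ (2 * M ^ p)⁻¹ := by positivity
    nlinarith
  have hA_ne : volume A ≠ 0 := by
    intro h0
    have h2 : (1:ENNReal) ≤ ENNReal.ofReal (1/16) := by
      calc (1:ENNReal) = volume K := hKvol.symm
        _ = volume (A ∪ (K \ A)) := by rw [Set.union_diff_cancel hAK]
        _ ≤ volume A + volume (K \ A) := measure_union_le _ _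
        _ = volume (K \ A) := by rw [h0, zero_add]
        _ ≤ _ := hsmall.trans (ENNReal.ofReal_le_ofReal hc_le)
    have h3 : ENNReal.ofReal (1/16) < 1 := by
      rw [ENNReal.ofReal_lt_one]; norm_num
    exact absurd h2 (not_le.2 h3)
  have hAfin : volume A ≠ ⊤ := (lt_of_le_of_lt hA_le ENNReal.one_lt_top).ne
  have hvA_pos : 0 < (volume A).toReal := ENNReal.toReal_pos hA_ne hAfin
  have hvA_le1 : (volume A).toReal ≤ 1 := by
    rw [← ENNReal.toReal_one]
    exact ENNReal.toReal_mono ENNReal.one_ne_top hA_le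
  set t := (volume A).toReal ^ (-(1:ℝ)/n) with ht_def
  have hexp : -(1:ℝ)/n ≤ 0 :=
    div_nonpos_of_nonpos_of_nonneg (by norm_num) (Nat.cast_nonneg n)
  have ht1 : 1 ≤ t := Real.one_le_rpow_of_pos_of_le_one_of_nonpos hvA_pos hvA_le1 hexp
  have ht0 : (0:ℝ) < t := lt_of_lt_of_le one_pos ht1
  have hpt : ∀ x : EuclideanSpace ℝ (Fin n), |⟪t • x, θ⟫| ^ p = t ^ p * |⟪x, θ⟫| ^ p := by
    intro x
    rw [real_inner_smul_left, abs_mul, abs_of_pos ht0, Real.mul_rpow ht0.le (abs_nonneg _)]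
  have hcs := Measure.setIntegral_comp_smul_of_pos volume (fun x => |⟪x, θ⟫| ^ p) A ht0
  rw [finrank_euclideanSpace_fin] at hcs
  simp only [hpt, smul_eq_mul] at hcs
  rw [integral_const_mul] at hcs
  have htA : ∫ x in A, |⟪x, θ⟫| ^ p ≤ ∫ x in t • A, |⟪x, θ⟫| ^ p := by
    have hAnn : 0 ≤ ∫ x in A, |⟪x, θ⟫| ^ p := setIntegral_nonneg hAmeas fun x _ => hfnn x
    have htp : 1 ≤ t ^ p := Real.one_le_rpow ht1 hp0.le
    have htn : 1 ≤ t ^ n := one_le_pow₀ ht1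
    have h3 : ∫ x in t • A, |⟪x, θ⟫| ^ p = (t ^ n * t ^ p) * ∫ x in A, |⟪x, θ⟫| ^ p := by
      rw [mul_assoc, hcs, ← mul_assoc, mul_inv_cancel₀ (by positivity), one_mul]
    have h4 : (1:ℝ) ≤ t ^ n * t ^ p :=
      le_trans htn (le_mul_of_one_le_right (by positivity) htp)
    have h5 := mul_le_mul_of_nonneg_right h4 hAnn
    rw [one_mul] at h5
    rw [h3]
    exact h5
  linarith [hIA, htA]
end

section
/- Let K be a centered convex body of volume 1 in ℝ^n and 2 ≤ q ≤ n. Then (∫_{O(n)} I_1^q(K, Z_q^∘(U(K))) dν(U))^{1/q} ≤ c_{n,q} · I_q(K)^2, where c_{n,q} = (∫_{S^{n-1}} |⟨e_1,θ⟩|^q dσ(θ))^{1/q}, I_q(K) = (∫_K ‖x‖_2^q dx)^{1/q}, and I_1(K, Z_q^∘(M)) = ∫_K (∫_M |⟨x,y⟩|^q dy)^{1/q} dx. -/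
open MeasureTheory
open scoped RealInnerProductSpace

noncomputable instance stmt5.instMS (n : ℕ) :
    MeasurableSpace (Matrix.orthogonalGroup (Fin n) ℝ) := borel _

namespace Stmt5Aux

variable {n : ℕ}

instance : BorelSpace (Matrix.orthogonalGroup (Fin n) ℝ) := ⟨rfl⟩

instance : SecondCountableTopology (Matrix (Fin n) (Fin n) ℝ) :=
  inferInstanceAs (SecondCountableTopology (Fin n → Fin n → ℝ))

instance : SecondCountableTopology (Matrix.orthogonalGroup (Fin n) ℝ) :=
  TopologicalSpace.Subtype.secondCountableTopology _

lemma continuous_mulG : Continuous (fun p : (Matrix.orthogonalGroup (Fin n) ℝ) ×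
    (Matrix.orthogonalGroup (Fin n) ℝ) => p.1 * p.2) :=
  Continuous.subtype_mk ((continuous_subtype_val.comp continuous_fst).mul
    (continuous_subtype_val.comp continuous_snd)) _

lemma continuous_invG : Continuous (fun U : Matrix.orthogonalGroup (Fin n) ℝ => U⁻¹) :=
  Continuous.subtype_mk (continuous_star.comp continuous_subtype_val) _

variable {ν : Measure (Matrix.orthogonalGroup (Fin n) ℝ)} [IsProbabilityMeasure ν]

/-- left invariance for integrals -/
lemma int_left_inv
    (hν : ∀ U : Matrix.orthogonalGroup (Fin n) ℝ, Measure.map (fun V => U * V) ν = ν)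
    (f : Matrix.orthogonalGroup (Fin n) ℝ → ℝ) (hf : Continuous f)
    (W : Matrix.orthogonalGroup (Fin n) ℝ) :
    ∫ U, f (W * U) ∂ν = ∫ U, f U ∂ν := by
  conv_rhs => rw [← hν W]
  rw [integral_map]
  · exact (continuous_mulG.comp (continuous_const.prodMk continuous_id)).measurable.aemeasurable
  · rw [hν W]; exact hf.aestronglyMeasurable

lemma int_inv_inv
    (hν : ∀ U : Matrix.orthogonalGroup (Fin n) ℝ, Measure.map (fun V => U * V) ν = ν)
    (f : Matrix.orthogonalGroup (Fin n) ℝ → ℝ) (hf : Continuous f)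
    {C : ℝ} (hb : ∀ U, ‖f U‖ ≤ C) :
    ∫ U, f U⁻¹ ∂ν = ∫ U, f U ∂ν := by
  have hH : Continuous (fun p : (Matrix.orthogonalGroup (Fin n) ℝ) ×
      (Matrix.orthogonalGroup (Fin n) ℝ) => f (p.1⁻¹ * p.2)) :=
    hf.comp (continuous_mulG.comp ((continuous_invG.comp continuous_fst).prodMk continuous_snd))
  have hint : Integrable (Function.uncurry fun V U => f (V⁻¹ * U)) (ν.prod ν) := by
    refine ⟨hH.aestronglyMeasurable, ?_⟩
    exact HasFiniteIntegral.of_bounded (C := C) (Filter.Eventually.of_forall fun p => hb _)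
  have h1 : ∫ V, ∫ U, f (V⁻¹ * U) ∂ν ∂ν = ∫ U, f U ∂ν := by
    rw [integral_congr_ae (Filter.Eventually.of_forall fun V => int_left_inv hν f hf V⁻¹)]
    simp
  have h2 : ∫ U, ∫ V, f (V⁻¹ * U) ∂ν ∂ν = ∫ V, f V⁻¹ ∂ν := by
    have inner_eq : ∀ U, ∫ V, f (V⁻¹ * U) ∂ν = ∫ V, f V⁻¹ ∂ν := by
      intro U
      have := int_left_inv hν (fun V => f (V⁻¹ * U)) (hf.comp (continuous_mulG.comp
        (continuous_invG.prodMk continuous_const))) U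
      calc ∫ V, f (V⁻¹ * U) ∂ν = ∫ V, f ((U * V)⁻¹ * U) ∂ν := by rw [this]
      _ = ∫ V, f V⁻¹ ∂ν := by
          congr 1; funext V
          congr 1
          rw [mul_inv_rev, mul_assoc, inv_mul_cancel, mul_one]
    rw [integral_congr_ae (Filter.Eventually.of_forall inner_eq)]
    simp
  rw [← h2, ← integral_integral_swap hint, h1]

lemma int_right_inv
    (hν : ∀ U : Matrix.orthogonalGroup (Fin n) ℝ, Measure.map (fun V => U * V) ν = ν)
    (f : Matrix.orthogonalGroup (Fin n) ℝ → ℝ) (hf : Continuous f)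
    {C : ℝ} (hb : ∀ U, ‖f U‖ ≤ C)
    (W : Matrix.orthogonalGroup (Fin n) ℝ) :
    ∫ U, f (U * W) ∂ν = ∫ U, f U ∂ν := by
  have e1 : ∫ U, f (U * W) ∂ν = ∫ U, f (U⁻¹ * W) ∂ν := by
    rw [int_inv_inv hν (fun U => f (U * W))
      (hf.comp (continuous_mulG.comp (continuous_id.prodMk continuous_const)))
      (C := C) (fun U => hb _)]
  have e2 : ∫ U, f (U⁻¹ * W) ∂ν = ∫ U, f U⁻¹ ∂ν := by
    have := int_left_inv hν (fun X => f X⁻¹) (hf.comp continuous_invG) W⁻¹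
    calc ∫ U, f (U⁻¹ * W) ∂ν = ∫ U, f (W⁻¹ * U)⁻¹ ∂ν := by
          congr 1; funext U; congr 1; rw [mul_inv_rev, inv_inv]
    _ = ∫ U, f U⁻¹ ∂ν := this
  rw [e1, e2, int_inv_inv hν f hf hb]





lemma toEuclideanLin_mul (A B : Matrix (Fin n) (Fin n) ℝ) (x : EuclideanSpace ℝ (Fin n)) :
    Matrix.toEuclideanLin (A * B) x = Matrix.toEuclideanLin A (Matrix.toEuclideanLin B x) := by
  simp [Matrix.toEuclideanLin_apply, Matrix.mulVec_mulVec]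

lemma toEuclideanLin_one (x : EuclideanSpace ℝ (Fin n)) :
    Matrix.toEuclideanLin (1 : Matrix (Fin n) (Fin n) ℝ) x = x := by
  simp [Matrix.toEuclideanLin_apply]

lemma inner_star_left (A : Matrix (Fin n) (Fin n) ℝ) (x y : EuclideanSpace ℝ (Fin n)) :
    ⟪Matrix.toEuclideanLin (star A) x, y⟫ = ⟪x, Matrix.toEuclideanLin A y⟫ := by
  rw [Matrix.star_eq_conjTranspose, Matrix.toEuclideanLin_conjTranspose_eq_adjoint,
    LinearMap.adjoint_inner_left]

lemma norm_toEuclideanLin (U : Matrix.orthogonalGroup (Fin n) ℝ)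
    (y : EuclideanSpace ℝ (Fin n)) :
    ‖Matrix.toEuclideanLin (U : Matrix (Fin n) (Fin n) ℝ) y‖ = ‖y‖ := by
  have h1 : Matrix.toEuclideanLin (star (U : Matrix (Fin n) (Fin n) ℝ))
      (Matrix.toEuclideanLin (U : Matrix (Fin n) (Fin n) ℝ) y) = y := by
    rw [← toEuclideanLin_mul, Matrix.UnitaryGroup.star_mul_self U, toEuclideanLin_one]
  have h2 := inner_star_left (U : Matrix (Fin n) (Fin n) ℝ)
    (Matrix.toEuclideanLin (U : Matrix (Fin n) (Fin n) ℝ) y) y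
  rw [h1] at h2
  rw [norm_eq_sqrt_real_inner, norm_eq_sqrt_real_inner y, ← h2]

lemma exists_orthogonal {x y : EuclideanSpace ℝ (Fin n)} (h : ‖x‖ = ‖y‖) :
    ∃ W : Matrix.orthogonalGroup (Fin n) ℝ,
      Matrix.toEuclideanLin (W : Matrix (Fin n) (Fin n) ℝ) x = y := by
  set T : EuclideanSpace ℝ (Fin n) ≃ₗᵢ[ℝ] EuclideanSpace ℝ (Fin n) :=
    Submodule.reflection (ℝ ∙ (x - y))ᗮ with hT
  set M : Matrix (Fin n) (Fin n) ℝ :=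
    (Matrix.toEuclideanLin (𝕜 := ℝ) (m := Fin n) (n := Fin n)).symm
      (T.toLinearEquiv : EuclideanSpace ℝ (Fin n) →ₗ[ℝ] EuclideanSpace ℝ (Fin n)) with hM
  have hMT : ∀ z, Matrix.toEuclideanLin M z = T z := by
    intro z
    rw [hM, LinearEquiv.apply_symm_apply]
    rfl
  have hstar : ∀ z, Matrix.toEuclideanLin (star M) z = T.symm z := by
    intro z
    apply ext_inner_right ℝ
    intro w
    rw [inner_star_left, hMT]
    calc ⟪z, T w⟫ = ⟪T (T.symm z), T w⟫ := by rw [T.apply_symm_apply]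
    _ = ⟪T.symm z, w⟫ := T.inner_map_map _ _
  have hmem : M ∈ Matrix.unitaryGroup (Fin n) ℝ := by
    rw [Matrix.mem_unitaryGroup_iff']
    apply (Matrix.toEuclideanLin (𝕜 := ℝ) (m := Fin n) (n := Fin n)).injective
    apply LinearMap.ext
    intro z
    rw [toEuclideanLin_mul, hMT, hstar, T.symm_apply_apply, toEuclideanLin_one]
  refine ⟨⟨M, hmem⟩, ?_⟩
  rw [hMT]
  exact Submodule.reflection_sub h



lemma continuous_app :
    Continuous (fun p : (Matrix.orthogonalGroup (Fin n) ℝ) × EuclideanSpace ℝ (Fin n) =>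
      Matrix.toEuclideanLin (p.1 : Matrix (Fin n) (Fin n) ℝ) p.2) := by
  simp only [Matrix.toEuclideanLin_apply]
  exact (PiLp.continuous_toLp 2 _).comp
    ((continuous_subtype_val.comp continuous_fst).matrix_mulVec
      ((PiLp.continuous_ofLp 2 _).comp continuous_snd))

variable {q : ℝ}

lemma f_cont (hq0 : 0 ≤ q) (x y : EuclideanSpace ℝ (Fin n)) :
    Continuous (fun U : Matrix.orthogonalGroup (Fin n) ℝ =>
      |⟪x, Matrix.toEuclideanLin (U : Matrix (Fin n) (Fin n) ℝ) y⟫| ^ q) := by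
  apply Continuous.rpow_const
  · exact (continuous_const.inner
      (continuous_app.comp (continuous_id.prodMk continuous_const))).abs
  · exact fun _ => Or.inr hq0

lemma f_cont2 (hq0 : 0 ≤ q) (x : EuclideanSpace ℝ (Fin n)) :
    Continuous (fun p : (Matrix.orthogonalGroup (Fin n) ℝ) × EuclideanSpace ℝ (Fin n) =>
      |⟪x, Matrix.toEuclideanLin (p.1 : Matrix (Fin n) (Fin n) ℝ) p.2⟫| ^ q) := by
  apply Continuous.rpow_const
  · exact (continuous_const.inner continuous_app).abs
  · exact fun _ => Or.inr hq0

lemma f_bound (hq0 : 0 ≤ q) (x y : EuclideanSpace ℝ (Fin n))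
    (U : Matrix.orthogonalGroup (Fin n) ℝ) :
    ‖(|⟪x, Matrix.toEuclideanLin (U : Matrix (Fin n) (Fin n) ℝ) y⟫| ^ q)‖
      ≤ (‖x‖ * ‖y‖) ^ q := by
  rw [Real.norm_eq_abs, abs_of_nonneg (Real.rpow_nonneg (abs_nonneg _) q)]
  apply Real.rpow_le_rpow (abs_nonneg _) _ hq0
  exact le_trans (abs_real_inner_le_norm _ _) (by rw [norm_toEuclideanLin])

/-- `φ x y = ∫ |⟨x, U y⟩|^q dν(U)`. -/
noncomputable def phi (ν : Measure (Matrix.orthogonalGroup (Fin n) ℝ)) (q : ℝ)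
    (x y : EuclideanSpace ℝ (Fin n)) : ℝ :=
  ∫ U, |⟪x, Matrix.toEuclideanLin (U : Matrix (Fin n) (Fin n) ℝ) y⟫| ^ q ∂ν

lemma phi_left (hq0 : 0 ≤ q)
    (hν : ∀ U : Matrix.orthogonalGroup (Fin n) ℝ, Measure.map (fun V => U * V) ν = ν)
    (W : Matrix.orthogonalGroup (Fin n) ℝ) (x y : EuclideanSpace ℝ (Fin n)) :
    phi ν q (Matrix.toEuclideanLin (W : Matrix (Fin n) (Fin n) ℝ) x) y = phi ν q x y := by
  unfold phi
  have key : ∀ U : Matrix.orthogonalGroup (Fin n) ℝ,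
      ⟪Matrix.toEuclideanLin (W : Matrix (Fin n) (Fin n) ℝ) x,
        Matrix.toEuclideanLin (U : Matrix (Fin n) (Fin n) ℝ) y⟫
      = ⟪x, Matrix.toEuclideanLin ((W⁻¹ * U : _) : Matrix (Fin n) (Fin n) ℝ) y⟫ := by
    intro U
    have h1 := inner_star_left (star (W : Matrix (Fin n) (Fin n) ℝ)) x
      (Matrix.toEuclideanLin (U : Matrix (Fin n) (Fin n) ℝ) y)
    rw [star_star] at h1
    rw [h1, Matrix.UnitaryGroup.mul_val, toEuclideanLin_mul, Matrix.UnitaryGroup.inv_val]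
  calc ∫ U, |⟪Matrix.toEuclideanLin (W : Matrix (Fin n) (Fin n) ℝ) x,
        Matrix.toEuclideanLin (U : Matrix (Fin n) (Fin n) ℝ) y⟫| ^ q ∂ν
      = ∫ U, |⟪x, Matrix.toEuclideanLin (((W⁻¹ * U : _) : _) : Matrix (Fin n) (Fin n) ℝ) y⟫| ^ q ∂ν := by
        congr 1; funext U; rw [key]
    _ = ∫ U, |⟪x, Matrix.toEuclideanLin (U : Matrix (Fin n) (Fin n) ℝ) y⟫| ^ q ∂ν :=
        int_left_inv hν _ (f_cont hq0 x y) W⁻¹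

lemma phi_right (hq0 : 0 ≤ q)
    (hν : ∀ U : Matrix.orthogonalGroup (Fin n) ℝ, Measure.map (fun V => U * V) ν = ν)
    (W : Matrix.orthogonalGroup (Fin n) ℝ) (x y : EuclideanSpace ℝ (Fin n)) :
    phi ν q x (Matrix.toEuclideanLin (W : Matrix (Fin n) (Fin n) ℝ) y) = phi ν q x y := by
  unfold phi
  calc ∫ U, |⟪x, Matrix.toEuclideanLin (U : Matrix (Fin n) (Fin n) ℝ)
        (Matrix.toEuclideanLin (W : Matrix (Fin n) (Fin n) ℝ) y)⟫| ^ q ∂ν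
      = ∫ U, |⟪x, Matrix.toEuclideanLin (((U * W : _) : _) : Matrix (Fin n) (Fin n) ℝ) y⟫| ^ q ∂ν := by
        congr 1; funext U
        rw [Matrix.UnitaryGroup.mul_val, toEuclideanLin_mul]
    _ = ∫ U, |⟪x, Matrix.toEuclideanLin (U : Matrix (Fin n) (Fin n) ℝ) y⟫| ^ q ∂ν :=
        int_right_inv hν _ (f_cont hq0 x y) (f_bound hq0 x y) W

lemma phi_smul_left (hq0 : 0 ≤ q) (c : ℝ) (x y : EuclideanSpace ℝ (Fin n)) :
    phi ν q (c • x) y = |c| ^ q * phi ν q x y := by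
  unfold phi
  rw [← integral_const_mul]
  congr 1; funext U
  rw [real_inner_smul_left, abs_mul, Real.mul_rpow (abs_nonneg _) (abs_nonneg _)]

lemma phi_smul_right (hq0 : 0 ≤ q) (c : ℝ) (x y : EuclideanSpace ℝ (Fin n)) :
    phi ν q x (c • y) = |c| ^ q * phi ν q x y := by
  unfold phi
  rw [← integral_const_mul]
  congr 1; funext U
  rw [LinearMap.map_smul, real_inner_smul_right, abs_mul, Real.mul_rpow (abs_nonneg _) (abs_nonneg _)]

lemma phi_eq (hq1 : 1 ≤ q)
    (hν : ∀ U : Matrix.orthogonalGroup (Fin n) ℝ, Measure.map (fun V => U * V) ν = ν)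
    {e : EuclideanSpace ℝ (Fin n)} (he : ‖e‖ = 1) (x y : EuclideanSpace ℝ (Fin n)) :
    phi ν q x y = ‖x‖ ^ q * ‖y‖ ^ q * phi ν q e e := by
  have hq0 : 0 ≤ q := le_trans zero_le_one hq1
  have hqne : q ≠ 0 := by positivity
  rcases eq_or_ne x 0 with hx | hx
  · subst hx
    simp [phi, Real.zero_rpow hqne]
  rcases eq_or_ne y 0 with hy | hy
  · subst hy
    simp [phi, Real.zero_rpow hqne]
  have hxs : x = ‖x‖ • (‖x‖⁻¹ • x) := by
    rw [smul_inv_smul₀ (norm_ne_zero_iff.mpr hx)]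
  have hys : y = ‖y‖ • (‖y‖⁻¹ • y) := by
    rw [smul_inv_smul₀ (norm_ne_zero_iff.mpr hy)]
  have hxn : ‖(‖x‖⁻¹ • x)‖ = 1 := norm_smul_inv_norm hx
  have hyn : ‖(‖y‖⁻¹ • y)‖ = 1 := norm_smul_inv_norm hy
  obtain ⟨W1, hW1⟩ := exists_orthogonal (x := e) (y := ‖x‖⁻¹ • x) (by rw [he, hxn])
  obtain ⟨W2, hW2⟩ := exists_orthogonal (x := e) (y := ‖y‖⁻¹ • y) (by rw [he, hyn])
  calc phi ν q x y = phi ν q (‖x‖ • (‖x‖⁻¹ • x)) (‖y‖ • (‖y‖⁻¹ • y)) := by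
        rw [← hxs, ← hys]
    _ = |‖x‖| ^ q * (|‖y‖| ^ q * phi ν q (‖x‖⁻¹ • x) (‖y‖⁻¹ • y)) := by
        rw [phi_smul_left hq0, phi_smul_right hq0]
    _ = ‖x‖ ^ q * ‖y‖ ^ q * phi ν q (‖x‖⁻¹ • x) (‖y‖⁻¹ • y) := by
        rw [abs_of_nonneg (norm_nonneg x), abs_of_nonneg (norm_nonneg y)]; ring
    _ = ‖x‖ ^ q * ‖y‖ ^ q * phi ν q e e := by
        rw [← hW1, ← hW2, phi_left hq0 hν, phi_right hq0 hν]


lemma cq_eq (hq1 : 1 ≤ q)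
    (hν : ∀ U : Matrix.orthogonalGroup (Fin n) ℝ, Measure.map (fun V => U * V) ν = ν)
    {σ : Measure (EuclideanSpace ℝ (Fin n))} [IsProbabilityMeasure σ]
    (hσ1 : σ (Metric.sphere (0 : EuclideanSpace ℝ (Fin n)) 1) = 1)
    (hσinv : ∀ U : Matrix.orthogonalGroup (Fin n) ℝ,
      Measure.map (fun x => Matrix.toEuclideanLin (U : Matrix (Fin n) (Fin n) ℝ) x) σ = σ)
    {e : EuclideanSpace ℝ (Fin n)} (he : ‖e‖ = 1) :
    ∫ θ, |⟪e, θ⟫| ^ q ∂σ = phi ν q e e := by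
  have hq0 : 0 ≤ q := le_trans zero_le_one hq1
  have hsph : ∀ᵐ θ ∂σ, θ ∈ Metric.sphere (0 : EuclideanSpace ℝ (Fin n)) 1 := by
    rw [MeasureTheory.ae_iff]
    have : {θ : EuclideanSpace ℝ (Fin n) | ¬ θ ∈ Metric.sphere (0 : EuclideanSpace ℝ (Fin n)) 1}
        = (Metric.sphere (0 : EuclideanSpace ℝ (Fin n)) 1)ᶜ := rfl
    rw [this, measure_compl Metric.isClosed_sphere.measurableSet (measure_ne_top _ _),
      measure_univ, hσ1, tsub_self]
  have hnorm : ∀ᵐ θ ∂σ, ‖θ‖ = 1 := hsph.mono fun θ h => by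
    simpa using mem_sphere_zero_iff_norm.mp h
  have step1 : ∀ U : Matrix.orthogonalGroup (Fin n) ℝ,
      ∫ θ, |⟪e, θ⟫| ^ q ∂σ
        = ∫ θ, |⟪e, Matrix.toEuclideanLin (U : Matrix (Fin n) (Fin n) ℝ) θ⟫| ^ q ∂σ := by
    intro U
    conv_lhs => rw [← hσinv U]
    rw [integral_map]
    · exact ((continuous_app.comp (continuous_const.prodMk continuous_id)).measurable).aemeasurable
    · rw [hσinv U]
      exact (((continuous_const.inner continuous_id).abs).rpow_const
        (fun _ => Or.inr hq0)).aestronglyMeasurable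
  have hint : Integrable (Function.uncurry fun (U : Matrix.orthogonalGroup (Fin n) ℝ)
      (θ : EuclideanSpace ℝ (Fin n)) =>
        |⟪e, Matrix.toEuclideanLin (U : Matrix (Fin n) (Fin n) ℝ) θ⟫| ^ q) (ν.prod σ) := by
    refine ⟨(f_cont2 hq0 e).aestronglyMeasurable, ?_⟩
    apply HasFiniteIntegral.of_bounded (C := 1)
    have hmeas : MeasurableSet {p : (Matrix.orthogonalGroup (Fin n) ℝ) ×
        EuclideanSpace ℝ (Fin n) | ‖p.2‖ = 1} :=
      (isClosed_eq (continuous_norm.comp continuous_snd) continuous_const).measurableSet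
    have hae : ∀ᵐ p ∂(ν.prod σ), ‖p.2‖ = 1 :=
      (Measure.ae_prod_iff_ae_ae hmeas).mpr (Filter.Eventually.of_forall fun U => hnorm)
    refine hae.mono fun p hp => ?_
    have := f_bound hq0 e p.2 p.1
    rwa [he, hp, one_mul, Real.one_rpow] at this
  have step2 : ∫ U, (∫ θ, |⟪e, Matrix.toEuclideanLin (U : Matrix (Fin n) (Fin n) ℝ) θ⟫| ^ q ∂σ) ∂ν
      = ∫ θ, |⟪e, θ⟫| ^ q ∂σ := by
    rw [integral_congr_ae (Filter.Eventually.of_forall fun U => (step1 U).symm),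
      integral_const, probReal_univ, one_smul]
  calc ∫ θ, |⟪e, θ⟫| ^ q ∂σ
      = ∫ U, (∫ θ, |⟪e, Matrix.toEuclideanLin (U : Matrix (Fin n) (Fin n) ℝ) θ⟫| ^ q ∂σ) ∂ν :=
        step2.symm
    _ = ∫ θ, (∫ U, |⟪e, Matrix.toEuclideanLin (U : Matrix (Fin n) (Fin n) ℝ) θ⟫| ^ q ∂ν) ∂σ :=
        integral_integral_swap hint
    _ = ∫ θ, (‖e‖ ^ q * ‖θ‖ ^ q * phi ν q e e) ∂σ :=
        integral_congr_ae (Filter.Eventually.of_forall fun θ => phi_eq hq1 hν he e θ)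
    _ = ∫ (_ : EuclideanSpace ℝ (Fin n)), phi ν q e e ∂σ :=
        integral_congr_ae (hnorm.mono fun θ h => by
          simp only [he, h, Real.one_rpow, one_mul])
    _ = phi ν q e e := by rw [integral_const, probReal_univ, one_smul]

end Stmt5Aux

/-- Let `K` be a centered convex body of volume 1 in `ℝⁿ` and `2 ≤ q ≤ n`. Then
`(∫_{O(n)} I₁^q(K, Z_q°(U(K))) dν(U))^(1/q) ≤ c_{n,q} · I_q(K)²`, where
`c_{n,q} = (∫_{S^{n-1}} |⟨e₁,θ⟩|^q dσ(θ))^(1/q)`, `I_q(K) = (∫_K ‖x‖₂^q dx)^(1/q)`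
and `I₁(K, Z_q°(U(K))) = ∫_K (∫_K |⟨x,Uy⟩|^q dy)^(1/q) dx`. -/
theorem stmt5 (n : ℕ) (hn : 0 < n) (K : Set (EuclideanSpace ℝ (Fin n)))
    (hKcomp : IsCompact K) (hKconv : Convex ℝ K) (hKint : (interior K).Nonempty)
    (hKvol : volume K = 1) (hKcen : ∫ x in K, x = 0)
    (q : ℝ) (hq2 : 2 ≤ q) (hqn : q ≤ n)
    (ν : Measure (Matrix.orthogonalGroup (Fin n) ℝ)) [IsProbabilityMeasure ν]
    (hν : ∀ U : Matrix.orthogonalGroup (Fin n) ℝ,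
      Measure.map (fun V => U * V) ν = ν)
    (σ : Measure (EuclideanSpace ℝ (Fin n))) [IsProbabilityMeasure σ]
    (hσ1 : σ (Metric.sphere (0 : EuclideanSpace ℝ (Fin n)) 1) = 1)
    (hσinv : ∀ U : Matrix.orthogonalGroup (Fin n) ℝ,
      Measure.map (fun x => Matrix.toEuclideanLin (U : Matrix (Fin n) (Fin n) ℝ) x) σ = σ) :
    (∫ U, (∫ x in K,
        (∫ y in K, |⟪x, Matrix.toEuclideanLin ((U : Matrix (Fin n) (Fin n) ℝ)) y⟫| ^ q)
          ^ (1 / q)) ^ q ∂ν) ^ (1 / q)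
      ≤ (∫ θ, |⟪EuclideanSpace.single (⟨0, hn⟩ : Fin n) (1 : ℝ), θ⟫| ^ q ∂σ) ^ (1 / q) *
        ((∫ x in K, ‖x‖ ^ q) ^ (1 / q)) ^ 2 := by
  classical
  have hq1 : 1 ≤ q := le_trans one_le_two hq2
  have hq0 : 0 ≤ q := le_trans zero_le_one hq1
  have hqne : q ≠ 0 := by positivity
  set e : EuclideanSpace ℝ (Fin n) := EuclideanSpace.single (⟨0, hn⟩ : Fin n) (1 : ℝ) with hedef
  have he : ‖e‖ = 1 := by rw [hedef, EuclideanSpace.norm_single, norm_one]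
  set Cq : ℝ := ∫ θ, |⟪e, θ⟫| ^ q ∂σ with hCqdef
  set I : ℝ := ∫ x in K, ‖x‖ ^ q with hIdef
  have hCq0 : 0 ≤ Cq := integral_nonneg fun θ => Real.rpow_nonneg (abs_nonneg _) q
  have hI0 : 0 ≤ I := integral_nonneg fun x => Real.rpow_nonneg (norm_nonneg _) q
  have hKm : MeasurableSet K := hKcomp.isClosed.measurableSet
  haveI hKv : IsProbabilityMeasure (volume.restrict K) :=
    ⟨by rw [Measure.restrict_apply_univ, hKvol]⟩
  obtain ⟨R, hKR⟩ := hKcomp.isBounded.subset_closedBall 0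
  have hRK : ∀ z ∈ K, ‖z‖ ≤ R := fun z hz => by
    simpa using mem_closedBall_iff_norm.mp (hKR hz)
  -- the key rotational-invariance identity
  have key : ∀ x y : EuclideanSpace ℝ (Fin n),
      (∫ U, |⟪x, Matrix.toEuclideanLin ((U : Matrix (Fin n) (Fin n) ℝ)) y⟫| ^ q ∂ν)
        = ‖x‖ ^ q * ‖y‖ ^ q * Cq := by
    intro x y
    have hc : Cq = Stmt5Aux.phi ν q e e := Stmt5Aux.cq_eq hq1 hν hσ1 hσinv he
    show Stmt5Aux.phi ν q x y = _
    rw [Stmt5Aux.phi_eq hq1 hν he x y, hc]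
  -- product measure setup
  set P : Measure (EuclideanSpace ℝ (Fin n) × EuclideanSpace ℝ (Fin n)) :=
    (volume.restrict K).prod (volume.restrict K) with hPdef
  have hFcont : Continuous (fun p : (Matrix.orthogonalGroup (Fin n) ℝ) ×
      (EuclideanSpace ℝ (Fin n) × EuclideanSpace ℝ (Fin n)) =>
        |⟪p.2.1, Matrix.toEuclideanLin ((p.1 : Matrix (Fin n) (Fin n) ℝ)) p.2.2⟫| ^ q) := by
    apply Continuous.rpow_const
    · exact ((continuous_snd.fst).inner
        (Stmt5Aux.continuous_app.comp (continuous_fst.prodMk continuous_snd.snd))).abs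
    · exact fun _ => Or.inr hq0
  have hb : ∀ (U : Matrix.orthogonalGroup (Fin n) ℝ) (x y : EuclideanSpace ℝ (Fin n)),
      x ∈ K → y ∈ K →
      ‖(|⟪x, Matrix.toEuclideanLin ((U : Matrix (Fin n) (Fin n) ℝ)) y⟫| ^ q)‖ ≤ (R * R) ^ q := by
    intro U x y hx hy
    have h0R : 0 ≤ R := le_trans (norm_nonneg x) (hRK x hx)
    refine le_trans (Stmt5Aux.f_bound hq0 x y U) ?_
    exact Real.rpow_le_rpow (mul_nonneg (norm_nonneg _) (norm_nonneg _))
      (mul_le_mul (hRK x hx) (hRK y hy) (norm_nonneg _) h0R) hq0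
  have hPae : ∀ᵐ z ∂P, z.1 ∈ K ∧ z.2 ∈ K :=
    (Measure.ae_prod_iff_ae_ae (hKm.prod hKm)).mpr
      ((ae_restrict_mem hKm).mono fun x hx =>
        (ae_restrict_mem hKm).mono fun y hy => ⟨hx, hy⟩)
  have hνPae : ∀ᵐ p ∂(ν.prod P), p.2.1 ∈ K ∧ p.2.2 ∈ K :=
    (Measure.ae_prod_iff_ae_ae ((hKm.prod hKm).preimage measurable_snd)).mpr
      (Filter.Eventually.of_forall fun _ => hPae)
  have hIntBig : Integrable (fun p : (Matrix.orthogonalGroup (Fin n) ℝ) ×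
      (EuclideanSpace ℝ (Fin n) × EuclideanSpace ℝ (Fin n)) =>
        |⟪p.2.1, Matrix.toEuclideanLin ((p.1 : Matrix (Fin n) (Fin n) ℝ)) p.2.2⟫| ^ q)
      (ν.prod P) :=
    ⟨hFcont.aestronglyMeasurable, HasFiniteIntegral.of_bounded (C := (R * R) ^ q)
      (hνPae.mono fun p hp => hb _ _ _ hp.1 hp.2)⟩
  have hIntInner : ∀ U : Matrix.orthogonalGroup (Fin n) ℝ,
      Integrable (fun z : EuclideanSpace ℝ (Fin n) × EuclideanSpace ℝ (Fin n) =>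
        |⟪z.1, Matrix.toEuclideanLin ((U : Matrix (Fin n) (Fin n) ℝ)) z.2⟫| ^ q) P := by
    intro U
    refine ⟨(hFcont.comp (continuous_const.prodMk continuous_id)).aestronglyMeasurable, ?_⟩
    exact HasFiniteIntegral.of_bounded (C := (R * R) ^ q)
      (hPae.mono fun z hz => hb U _ _ hz.1 hz.2)
  -- Fubini computation of the upper bound
  have hB : ∫ U, (∫ z, |⟪z.1, Matrix.toEuclideanLin ((U : Matrix (Fin n) (Fin n) ℝ)) z.2⟫| ^ q ∂P) ∂ν
      = I * I * Cq := by
    have hswap := integral_integral_swap (f := fun (U : Matrix.orthogonalGroup (Fin n) ℝ)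
      (z : EuclideanSpace ℝ (Fin n) × EuclideanSpace ℝ (Fin n)) =>
        |⟪z.1, Matrix.toEuclideanLin ((U : Matrix (Fin n) (Fin n) ℝ)) z.2⟫| ^ q) hIntBig
    rw [hswap]
    have : ∀ z : EuclideanSpace ℝ (Fin n) × EuclideanSpace ℝ (Fin n),
        (∫ U, |⟪z.1, Matrix.toEuclideanLin ((U : Matrix (Fin n) (Fin n) ℝ)) z.2⟫| ^ q ∂ν)
        = ‖z.1‖ ^ q * ‖z.2‖ ^ q * Cq := fun z => key z.1 z.2
    rw [integral_congr_ae (Filter.Eventually.of_forall this)]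
    rw [MeasureTheory.integral_mul_const, integral_prod_mul (fun x => ‖x‖ ^ q) (fun y => ‖y‖ ^ q)]
  -- Jensen / Hölder step, pointwise in U
  have hA : ∀ U : Matrix.orthogonalGroup (Fin n) ℝ,
      (∫ x in K,
        (∫ y in K, |⟪x, Matrix.toEuclideanLin ((U : Matrix (Fin n) (Fin n) ℝ)) y⟫| ^ q)
          ^ (1 / q)) ^ q
      ≤ ∫ z, |⟪z.1, Matrix.toEuclideanLin ((U : Matrix (Fin n) (Fin n) ℝ)) z.2⟫| ^ q ∂P := by
    intro U
    set GU : EuclideanSpace ℝ (Fin n) → ℝ := fun x =>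
      ∫ y in K, |⟪x, Matrix.toEuclideanLin ((U : Matrix (Fin n) (Fin n) ℝ)) y⟫| ^ q with hGUdef
    have hGU0 : ∀ x, 0 ≤ GU x :=
      fun x => integral_nonneg fun y => Real.rpow_nonneg (abs_nonneg _) q
    have hGUsm : StronglyMeasurable GU :=
      ((hFcont.comp (continuous_const.prodMk
        continuous_id)).stronglyMeasurable).integral_prod_right'
    have hGUb : ∀ᵐ x ∂(volume.restrict K), GU x ≤ (R * R) ^ q := by
      refine (ae_restrict_mem hKm).mono fun x hx => ?_
      have h1 : GU x ≤ ∫ _ in K, (R * R) ^ q := by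
        apply integral_mono_of_nonneg
        · exact Filter.Eventually.of_forall fun y => Real.rpow_nonneg (abs_nonneg _) q
        · exact integrable_const _
        · exact (ae_restrict_mem hKm).mono fun y hy =>
            le_trans (le_abs_self _) (by rw [← Real.norm_eq_abs]; exact hb U x y hx hy)
      refine le_trans h1 ?_
      rw [integral_const, probReal_univ, one_smul]
    have hGUint : Integrable GU (volume.restrict K) :=
      ⟨hGUsm.aestronglyMeasurable, HasFiniteIntegral.of_bounded (C := (R * R) ^ q)
        (hGUb.mono fun x h => by rwa [Real.norm_eq_abs, abs_of_nonneg (hGU0 x)])⟩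
    have hfi : Integrable (fun x => GU x ^ (1 / q)) (volume.restrict K) := by
      refine ⟨((continuous_id.rpow_const fun _ => Or.inr (by positivity : (0:ℝ) ≤ 1 / q)).comp_stronglyMeasurable hGUsm).aestronglyMeasurable, ?_⟩
      apply HasFiniteIntegral.of_bounded (C := ((R * R) ^ q) ^ (1 / q))
      refine hGUb.mono fun x h => ?_
      rw [Real.norm_eq_abs, abs_of_nonneg (Real.rpow_nonneg (hGU0 x) _)]
      exact Real.rpow_le_rpow (hGU0 x) h (by positivity)
    have hcomp : (fun x => (GU x ^ (1 / q)) ^ q) = GU := funext fun x => by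
      rw [one_div, Real.rpow_inv_rpow (hGU0 x) hqne]
    have hgi : Integrable ((fun t : ℝ => t ^ q) ∘ fun x => GU x ^ (1 / q))
        (volume.restrict K) := by
      have : ((fun t : ℝ => t ^ q) ∘ fun x => GU x ^ (1 / q)) = GU := hcomp
      rw [this]; exact hGUint
    have jensen := (convexOn_rpow hq1).map_integral_le (μ := volume.restrict K)
      ((continuous_id.rpow_const fun _ => Or.inr hq0).continuousOn) isClosed_Ici
      (Filter.Eventually.of_forall fun x =>
        Set.mem_Ici.mpr (Real.rpow_nonneg (hGU0 x) _)) hfi hgi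
    refine le_trans jensen ?_
    have h2 : ∫ x in K, (GU x ^ (1 / q)) ^ q = ∫ x in K, GU x := by rw [hcomp]
    rw [h2]
    have h3 : ∫ x in K, GU x
        = ∫ z, |⟪z.1, Matrix.toEuclideanLin ((U : Matrix (Fin n) (Fin n) ℝ)) z.2⟫| ^ q ∂P :=
      integral_integral (f := fun x y =>
        |⟪x, Matrix.toEuclideanLin ((U : Matrix (Fin n) (Fin n) ℝ)) y⟫| ^ q) (hIntInner U)
    rw [h3]
  -- integrate the pointwise bound over ν and conclude
  have hchain : (∫ U, (∫ x in K,
      (∫ y in K, |⟪x, Matrix.toEuclideanLin ((U : Matrix (Fin n) (Fin n) ℝ)) y⟫| ^ q)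
        ^ (1 / q)) ^ q ∂ν) ≤ I * I * Cq := by
    rw [← hB]
    apply integral_mono_of_nonneg
    · exact Filter.Eventually.of_forall fun U => Real.rpow_nonneg
        (integral_nonneg fun x => Real.rpow_nonneg
          (integral_nonneg fun y => Real.rpow_nonneg (abs_nonneg _) q) _) q
    · exact hIntBig.integral_prod_left
    · exact Filter.Eventually.of_forall hA
  have hLHS0 : 0 ≤ ∫ U, (∫ x in K,
      (∫ y in K, |⟪x, Matrix.toEuclideanLin ((U : Matrix (Fin n) (Fin n) ℝ)) y⟫| ^ q)
        ^ (1 / q)) ^ q ∂ν :=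
    integral_nonneg fun U => Real.rpow_nonneg
      (integral_nonneg fun x => Real.rpow_nonneg
        (integral_nonneg fun y => Real.rpow_nonneg (abs_nonneg _) q) _) q
  calc (∫ U, (∫ x in K,
      (∫ y in K, |⟪x, Matrix.toEuclideanLin ((U : Matrix (Fin n) (Fin n) ℝ)) y⟫| ^ q)
        ^ (1 / q)) ^ q ∂ν) ^ (1 / q)
      ≤ (I * I * Cq) ^ (1 / q) := Real.rpow_le_rpow hLHS0 hchain (by positivity)
    _ = Cq ^ (1 / q) * (I ^ (1 / q)) ^ 2 := by
        rw [Real.mul_rpow (mul_nonneg hI0 hI0) hCq0, Real.mul_rpow hI0 hI0, pow_two]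
        ring
end

section
/- Let ℰ = T(B_2^{2m}) be an ellipsoid in ℝ^{2m} with eigenvalues λ_1 ≥ … ≥ λ_{2m} > 0 of √(T*T). Then there exists an m-dimensional subspace F_0 such that the orthogonal projection of ℰ onto F_0 equals λ_m · (B_2^{2m} ∩ F_0), i.e. P_{F_0}(ℰ) is a Euclidean ball of radius λ_m in F_0. -/
open MeasureTheory Matrix
open scoped Pointwise RealInnerProductSpace

-- helper 1: projection onto span of orthonormal family
lemma my_proj_span {ι : Type*} [Fintype ι]
    {E : Type*} [NormedAddCommGroup E] [InnerProductSpace ℝ E] [FiniteDimensional ℝ E]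
    (w : ι → E) (hw : Orthonormal ℝ w) (x : E) :
    (((Submodule.span ℝ (Set.range w)).orthogonalProjectionOnto x : E)) =
      ∑ i, (⟪w i, x⟫) • w i := by
  classical
  rw [← Submodule.starProjection_apply]
  apply Submodule.eq_starProjection_of_mem_of_inner_eq_zero
  · exact Submodule.sum_mem _ fun i _ => Submodule.smul_mem _ _
      (Submodule.subset_span ⟨i, rfl⟩)
  · intro z hz
    rw [Submodule.mem_span_range_iff_exists_fun ℝ] at hz
    obtain ⟨c, rfl⟩ := hz
    simp only [inner_sub_left, inner_sum, sum_inner, real_inner_smul_left,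
      real_inner_smul_right, orthonormal_iff_ite.mp hw, mul_ite, mul_one, mul_zero,
      Finset.mem_univ, if_true]
    refine Finset.sum_eq_zero fun j _ => ?_
    rw [Finset.sum_ite_eq' Finset.univ j]
    simp [real_inner_comm]

-- helper 2: Parseval for finite orthonormal combos
lemma my_inner_sum_sq {ι : Type*} [Fintype ι]
    {E : Type*} [NormedAddCommGroup E] [InnerProductSpace ℝ E]
    (w : ι → E) (hw : Orthonormal ℝ w) (a : ι → ℝ) :
    ⟪(∑ i, a i • w i), (∑ i, a i • w i)⟫ = ∑ i, a i ^ 2 := by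
  classical
  simp only [inner_sum, sum_inner, real_inner_smul_left, real_inner_smul_right,
    orthonormal_iff_ite.mp hw, mul_ite, mul_one, mul_zero, Finset.sum_ite_eq,
    Finset.mem_univ, if_true]
  refine Finset.sum_congr rfl fun i _ => ?_
  rw [Finset.sum_ite_eq' Finset.univ i]
  simp [sq]

set_option maxHeartbeats 2000000 in
set_option synthInstance.maxHeartbeats 400000 in
/-- Let `ℰ = T(B₂^{2m})` be an ellipsoid in `ℝ^{2m}` with eigenvalues
`λ₁ ≥ … ≥ λ_{2m} > 0` of `√(TᵀT)`. Then there exists an `m`-dimensional subspace `F₀`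
such that the orthogonal projection of `ℰ` onto `F₀` equals `λ_m · (B₂^{2m} ∩ F₀)`. -/
theorem stmt14 (m : ℕ) (hm : 0 < m)
    (T : Matrix (Fin (2 * m)) (Fin (2 * m)) ℝ) (hT : IsUnit T.det)
    (hherm : (Tᵀ * T).IsHermitian)
    (lam : Fin (2 * m) → ℝ) (hmono : Antitone lam) (hpos : ∀ i, 0 < lam i)
    (heig : ∃ σ : Equiv.Perm (Fin (2 * m)), ∀ i, lam i ^ 2 = hherm.eigenvalues (σ i)) :
    ∃ F₀ : Submodule ℝ (EuclideanSpace ℝ (Fin (2 * m))), Module.finrank ℝ F₀ = m ∧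
      ((↑) : F₀ → EuclideanSpace ℝ (Fin (2 * m))) ''
          ((F₀.orthogonalProjectionOnto) '' (Matrix.toEuclideanLin T '' Metric.closedBall 0 1))
        = lam (⟨m - 1, by omega⟩ : Fin (2 * m)) •
            (Metric.closedBall (0 : EuclideanSpace ℝ (Fin (2 * m))) 1 ∩ (F₀ : Set _)) := by
  classical
  obtain ⟨σ, hσ⟩ := heig
  set E := EuclideanSpace ℝ (Fin (2 * m)) with hE
  set f : E →ₗ[ℝ] E := Matrix.toEuclideanLin T with hf
  set g : E →ₗ[ℝ] E := Matrix.toEuclideanLin Tᵀ with hg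
  have hTH : Tᴴ = Tᵀ := Matrix.conjTranspose_eq_transpose_of_trivial T
  have hg_adj : g = LinearMap.adjoint f := by
    rw [hg, ← hTH]; exact Matrix.toEuclideanLin_conjTranspose_eq_adjoint T
  have hadj : ∀ x y : E, ⟪f x, y⟫ = ⟪x, g y⟫ := fun x y => by
    rw [hg_adj, LinearMap.adjoint_inner_right]
  -- eigenvectors
  set v : Fin (2 * m) → E := fun i => hherm.eigenvectorBasis (σ i) with hv_def
  have hv : Orthonormal ℝ v := hherm.eigenvectorBasis.orthonormal.comp σ σ.injective
  have hveq : ∀ i j, ⟪v i, v j⟫ = if i = j then 1 else 0 := fun i j => by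
    rw [orthonormal_iff_ite.mp hv]
  have heigv : ∀ i, g (f (v i)) = lam i ^ 2 • v i := by
    intro i
    have h1 := hherm.mulVec_eigenvectorBasis (σ i)
    rw [← hσ i] at h1
    have hcomp : Matrix.toEuclideanLin (Tᵀ * T) = g ∘ₗ f := by
      rw [hf, hg]
      exact Matrix.toLin_mul (PiLp.basisFun 2 ℝ (Fin (2 * m)))
        (PiLp.basisFun 2 ℝ (Fin (2 * m))) (PiLp.basisFun 2 ℝ (Fin (2 * m))) Tᵀ T
    have h2 : g (f (v i)) = Matrix.toEuclideanLin (Tᵀ * T) (v i) := by rw [hcomp]; rfl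
    rw [h2, Matrix.toEuclideanLin_apply]
    exact congrArg (WithLp.toLp 2) h1
  -- inner products of images of eigenvectors
  have hfvfv : ∀ i j, ⟪f (v i), f (v j)⟫ = if i = j then lam j ^ 2 else 0 := by
    intro i j
    rw [hadj, heigv, real_inner_smul_right, hveq]
    rcases eq_or_ne i j with rfl | h
    · simp
    · simp [h]
  set u : Fin (2 * m) → E := fun i => (lam i)⁻¹ • f (v i) with hu_def
  have huu : ∀ i j, ⟪u i, u j⟫ = if i = j then 1 else 0 := by
    intro i j
    simp only [hu_def]
    rw [real_inner_smul_left, real_inner_smul_right, hfvfv]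
    rcases eq_or_ne i j with rfl | h
    · simp only [if_pos rfl, sq, if_true]
      field_simp [(hpos i).ne']
    · simp [h]
  have hgu : ∀ i, g (u i) = lam i • v i := by
    intro i
    simp only [hu_def]
    rw [LinearMap.map_smul, heigv, smul_smul]
    congr 1
    field_simp [(hpos i).ne']
  have hfv : ∀ i, f (v i) = lam i • u i := by
    intro i
    simp only [hu_def, smul_smul]
    rw [mul_inv_cancel₀ (hpos i).ne', one_smul]
  have hfgu : ∀ i, f (g (u i)) = lam i ^ 2 • u i := by
    intro i
    rw [hgu, LinearMap.map_smul, hfv, smul_smul, sq]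
  -- the index pairing
  set μ : ℝ := lam ⟨m - 1, by omega⟩ with hμ
  have hμpos : 0 < μ := hpos _
  set i0 : Fin m → Fin (2 * m) := fun i => ⟨i.1, by omega⟩ with hi0
  set i1 : Fin m → Fin (2 * m) := fun i => ⟨2 * m - 1 - i.1, by omega⟩ with hi1
  have hlam0 : ∀ i : Fin m, μ ≤ lam (i0 i) := fun i => hmono (by
    simp only [hi0, Fin.mk_le_mk, Fin.le_def]
    omega)
  have hlam1 : ∀ i : Fin m, lam (i1 i) ≤ μ := fun i => hmono (by
    simp only [hi1, Fin.mk_le_mk, Fin.le_def]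
    omega)
  have hsq0 : ∀ i : Fin m, μ ^ 2 ≤ lam (i0 i) ^ 2 := fun i => by
    nlinarith [hlam0 i, hμpos]
  have hsq1 : ∀ i : Fin m, lam (i1 i) ^ 2 ≤ μ ^ 2 := fun i => by
    nlinarith [hlam1 i, hpos (i1 i)]
  set t : Fin m → ℝ := fun i =>
    (lam (i0 i) ^ 2 - μ ^ 2) / (lam (i0 i) ^ 2 - lam (i1 i) ^ 2) with ht_def
  have ht0 : ∀ i, 0 ≤ t i := fun i =>
    div_nonneg (by nlinarith [hsq0 i]) (by nlinarith [hsq0 i, hsq1 i])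
  have ht1 : ∀ i, t i ≤ 1 := fun i =>
    div_le_one_of_le₀ (by nlinarith [hsq1 i]) (by nlinarith [hsq0 i, hsq1 i])
  have htd : ∀ i, t i * (lam (i0 i) ^ 2 - lam (i1 i) ^ 2) = lam (i0 i) ^ 2 - μ ^ 2 := by
    intro i
    rcases eq_or_ne (lam (i0 i) ^ 2 - lam (i1 i) ^ 2) 0 with h | h
    · rw [h, mul_zero]
      nlinarith [hsq0 i, hsq1 i]
    · rw [ht_def]
      exact div_mul_cancel₀ _ h
  set c : Fin m → ℝ := fun i => Real.sqrt (1 - t i) with hc_def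
  set s : Fin m → ℝ := fun i => Real.sqrt (t i) with hs_def
  have hc2 : ∀ i, c i ^ 2 = 1 - t i := fun i => Real.sq_sqrt (by linarith [ht1 i])
  have hs2 : ∀ i, s i ^ 2 = t i := fun i => Real.sq_sqrt (ht0 i)
  have hcs : ∀ i, c i ^ 2 + s i ^ 2 = 1 := fun i => by rw [hc2, hs2]; ring
  have hmix : ∀ i, c i ^ 2 * lam (i0 i) ^ 2 + s i ^ 2 * lam (i1 i) ^ 2 = μ ^ 2 := by
    intro i
    rw [hc2, hs2]
    nlinarith [htd i]
  -- distinctness of indices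
  have hi00 : ∀ i j : Fin m, i0 i = i0 j → i = j := fun i j h => by
    simp only [hi0, Fin.mk.injEq] at h
    exact Fin.ext h
  have hi11 : ∀ i j : Fin m, i1 i = i1 j → i = j := fun i j h => by
    simp only [hi1, Fin.mk.injEq] at h
    exact Fin.ext (by omega)
  have hi01 : ∀ i j : Fin m, i0 i ≠ i1 j := fun i j h => by
    simp only [hi0, hi1, Fin.mk.injEq] at h
    omega
  -- the rotated vectors
  set w : Fin m → E := fun i => c i • u (i0 i) + s i • u (i1 i) with hw_def
  have hww : ∀ i j, ⟪w i, w j⟫ = if i = j then 1 else 0 := by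
    intro i j
    simp only [hw_def, inner_add_left, inner_add_right, real_inner_smul_left,
      real_inner_smul_right, huu]
    rcases eq_or_ne i j with rfl | h
    · simp only [eq_self_iff_true, if_true, if_pos rfl, if_neg (hi01 i i), if_neg (Ne.symm (hi01 i i))]
      nlinarith [hcs i]
    · rw [if_neg h, if_neg (fun hh => h (hi00 i j hh)), if_neg (fun hh => h (hi11 i j hh)),
        if_neg (hi01 i j), if_neg (Ne.symm (hi01 j i))]
      ring
  have hw_orth : Orthonormal ℝ w := orthonormal_iff_ite.mpr hww
  set b : Fin m → E := fun i => g (w i) with hb_def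
  have hfgw : ∀ i, f (b i) =
      (c i * lam (i0 i) ^ 2) • u (i0 i) + (s i * lam (i1 i) ^ 2) • u (i1 i) := by
    intro i
    simp only [hb_def, hw_def, map_add, LinearMap.map_smul, hfgu, smul_smul]
  have hbb : ∀ i j, ⟪b i, b j⟫ = if i = j then μ ^ 2 else 0 := by
    intro i j
    have h1 : ⟪b i, b j⟫ = ⟪f (b i), w j⟫ := by
      rw [hadj]
    rw [h1, hfgw, hw_def]
    simp only [inner_add_left, inner_add_right, real_inner_smul_left,
      real_inner_smul_right, huu]
    rcases eq_or_ne i j with rfl | h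
    · simp only [eq_self_iff_true, if_true, if_pos rfl, if_neg (hi01 i i), if_neg (Ne.symm (hi01 i i))]
      nlinarith [hmix i]
    · rw [if_neg h, if_neg (fun hh => h (hi00 i j hh)), if_neg (fun hh => h (hi11 i j hh)),
        if_neg (hi01 i j), if_neg (Ne.symm (hi01 j i))]
      ring
  set e : Fin m → E := fun i => μ⁻¹ • b i with he_def
  have hee : ∀ i j, ⟪e i, e j⟫ = if i = j then 1 else 0 := by
    intro i j
    simp only [he_def, real_inner_smul_left, real_inner_smul_right, hbb]
    rcases eq_or_ne i j with rfl | h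
    · rw [if_pos rfl, if_pos rfl, sq]
      field_simp
    · simp [h]
  have he_orth : Orthonormal ℝ e := orthonormal_iff_ite.mpr hee
  have hbe : ∀ i, b i = μ • e i := by
    intro i
    rw [he_def, smul_smul, mul_inv_cancel₀ hμpos.ne', one_smul]
  have hwb : ∀ (i : Fin m) (x : E), ⟪w i, f x⟫ = ⟪b i, x⟫ := by
    intro i x
    rw [real_inner_comm, hadj, real_inner_comm]
  have hwe : ∀ (i : Fin m) (x : E), ⟪w i, f x⟫ = μ * ⟪e i, x⟫ := by
    intro i x
    rw [hwb, hbe, real_inner_smul_left]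
  -- the subspace
  set F₀ : Submodule ℝ E := Submodule.span ℝ (Set.range w) with hF_def
  have hrank : Module.finrank ℝ F₀ = m := by
    rw [hF_def, finrank_span_eq_card hw_orth.linearIndependent, Fintype.card_fin]
  refine ⟨F₀, hrank, ?_⟩
  have hproj : ∀ x : E, ((F₀.orthogonalProjectionOnto x : E)) = ∑ i, (⟪w i, x⟫) • w i :=
    fun x => my_proj_span w hw_orth x
  ext y
  constructor
  · rintro ⟨py, ⟨fx, ⟨x, hx, rfl⟩, rfl⟩, rfl⟩
    rw [Metric.mem_closedBall, dist_zero_right] at hx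
    have hbess : ∑ i, (⟪e i, x⟫ : ℝ) ^ 2 ≤ 1 := by
      have h1 : ∑ i ∈ Finset.univ, ‖(⟪e i, x⟫ : ℝ)‖ ^ 2 ≤ ‖x‖ ^ 2 :=
        he_orth.sum_inner_products_le x
      have h2 : ∀ i : Fin m, ‖(⟪e i, x⟫ : ℝ)‖ ^ 2 = (⟪e i, x⟫ : ℝ) ^ 2 := fun i => by
        rw [Real.norm_eq_abs, sq_abs]
      rw [Finset.sum_congr rfl fun i _ => h2 i] at h1
      nlinarith [norm_nonneg x]
    have hnval : ((F₀.orthogonalProjectionOnto (f x) : E)) = ∑ i, (⟪w i, f x⟫) • w i := hproj _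
    have hnorm2 : ‖((F₀.orthogonalProjectionOnto (f x) : E))‖ ^ 2 ≤ μ ^ 2 := by
      rw [← real_inner_self_eq_norm_sq, hnval, my_inner_sum_sq w hw_orth]
      have : ∀ i : Fin m, (⟪w i, f x⟫ : ℝ) ^ 2 = μ ^ 2 * (⟪e i, x⟫ : ℝ) ^ 2 := fun i => by
        rw [hwe]; ring
      rw [Finset.sum_congr rfl fun i _ => this i, ← Finset.mul_sum]
      nlinarith [hμpos]
    have hnorm : ‖((F₀.orthogonalProjectionOnto (f x) : E))‖ ≤ μ := by
      nlinarith [norm_nonneg ((F₀.orthogonalProjectionOnto (f x) : E))]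
    refine ⟨μ⁻¹ • ((F₀.orthogonalProjectionOnto (f x) : E)), ⟨?_, ?_⟩, ?_⟩
    · rw [Metric.mem_closedBall, dist_zero_right, norm_smul, Real.norm_eq_abs,
        abs_of_pos (inv_pos.mpr hμpos)]
      calc μ⁻¹ * ‖((F₀.orthogonalProjectionOnto (f x) : E))‖ ≤ μ⁻¹ * μ :=
            mul_le_mul_of_nonneg_left hnorm (le_of_lt (inv_pos.mpr hμpos))
        _ = 1 := inv_mul_cancel₀ hμpos.ne'
    · exact F₀.smul_mem _ (F₀.orthogonalProjectionOnto (f x)).2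
    · simp only [smul_smul, mul_inv_cancel₀ hμpos.ne', one_smul]
  · rintro ⟨z, ⟨hzb, hzF⟩, rfl⟩
    rw [Metric.mem_closedBall, dist_zero_right] at hzb
    set a : Fin m → ℝ := fun i => ⟪w i, z⟫ with ha_def
    have hz_rep : ∑ i, a i • w i = z := by
      rw [← hproj z, ← Submodule.starProjection_apply, Submodule.starProjection_eq_self_iff.mpr hzF]
    set x : E := ∑ i, a i • e i with hx_def
    have hxnorm : ‖x‖ ≤ 1 := by
      have h1 : (⟪x, x⟫ : ℝ) = ∑ i, a i ^ 2 := my_inner_sum_sq e he_orth a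
      have h2 : (⟪z, z⟫ : ℝ) = ∑ i, a i ^ 2 := by
        conv_lhs => rw [← hz_rep]
        exact my_inner_sum_sq w hw_orth a
      have h3 : ‖x‖ ^ 2 = ‖z‖ ^ 2 := by
        rw [← real_inner_self_eq_norm_sq, ← real_inner_self_eq_norm_sq, h1, h2]
      nlinarith [norm_nonneg x, norm_nonneg z]
    refine ⟨F₀.orthogonalProjectionOnto (f x), ⟨f x, ⟨x, ?_, rfl⟩, rfl⟩, ?_⟩
    · rw [Metric.mem_closedBall, dist_zero_right]
      exact hxnorm
    · rw [hproj (f x)]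
      have hcoef : ∀ j : Fin m, (⟪w j, f x⟫ : ℝ) = μ * a j := by
        intro j
        rw [hwe, hx_def, inner_sum]
        have : ∀ i : Fin m, (⟪e j, a i • e i⟫ : ℝ) = a i * ⟪e j, e i⟫ := fun i =>
          real_inner_smul_right _ _ _
        rw [Finset.sum_congr rfl fun i _ => this i]
        simp only [hee, mul_ite, mul_one, mul_zero]
        rw [Finset.sum_ite_eq Finset.univ j a]
        simp
      rw [Finset.sum_congr rfl fun j _ => by rw [hcoef j, ← smul_smul]]
      rw [← Finset.smul_sum, hz_rep]
end
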